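/- Let $r$ be a rational number with $0 < r < 1$. Then $-1/r$ admits a negative continued fraction expansion $-1/r = a_1 - \cfrac{1}{a_2 - \cfrac{1}{\ddots - \cfrac{1}{a_n}}}$ in which every coefficient $a_i$ is an integer with $a_i \leq -2$. -/

import Mathlib

/-- The negative continued fraction `[a₁, …, aₙ] = a₁ - 1/[a₂, …, aₙ]`. -/
noncomputable def negCF : ℤ → List ℤ → ℚ
  | a, [] => (a : ℚ)
  | a, b :: l => (a : ℚ) - 1 / negCF b l

lemma negCF_aux (n : ℕ) : ∀ r : ℚ, r.den ≤ n → 0 < r → r < 1 →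
    ∃ (a : ℤ) (l : List ℤ), (∀ x ∈ a :: l, x ≤ -2) ∧ negCF a l = -1 / r := by
  induction n with
  | zero => intro r hd _ _; exact absurd hd (by have := r.den_pos; omega)
  | succ n ih =>
    intro r hd h0 h1
    set s : ℚ := r⁻¹ with hs
    have hr0 : r ≠ 0 := ne_of_gt h0
    have hs1 : 1 < s := one_lt_inv_iff₀.mpr ⟨h0, h1⟩
    have hc2 : 2 ≤ ⌈s⌉ := by
      have : (1 : ℤ) < ⌈s⌉ := by
        rw [Int.lt_ceil]; exact_mod_cast hs1
      omega
    have hinv : -1 / r = -s := by rw [hs, neg_div, one_div]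
    by_cases he : (⌈s⌉ : ℚ) = s
    · refine ⟨-⌈s⌉, [], ?_, ?_⟩
      · intro x hx; simp at hx; omega
      · simp only [negCF]; rw [hinv]; push_cast; rw [he]
    · set r' : ℚ := (⌈s⌉ : ℚ) - s with hr'
      have hr'0 : 0 < r' := by
        have := Int.le_ceil s
        have : s < (⌈s⌉ : ℚ) := lt_of_le_of_ne this (fun h => he h.symm)
        simpa [hr'] using this
      have hr'1 : r' < 1 := by
        have := Int.ceil_lt_add_one s
        simp only [hr']; linarith
      have hnum : 0 < r.num := Rat.num_pos.mpr h0
      have hnumden : r.num < (r.den : ℤ) := by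
        have h := h1
        rw [← Rat.num_div_den r, div_lt_one (by exact_mod_cast r.den_pos : (0:ℚ) < r.den)] at h
        exact_mod_cast h
      have hden' : r'.den ≤ n := by
        have h1' : r'.den ∣ s.den := by
          have := Rat.add_den_dvd ((⌈s⌉ : ℚ)) (-s)
          simpa [hr', sub_eq_add_neg] using this
        have h2' : (s.den : ℤ) ∣ r.num := by
          have := Rat.den_dvd (r.den : ℤ) r.num
          rwa [hs, Rat.inv_def r]
        have h3' : (s.den : ℤ) ≤ r.num := Int.le_of_dvd hnum h2'
        have h4' : r'.den ≤ s.den := Nat.le_of_dvd s.pos h1'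
        omega
      obtain ⟨a, l, hal, heq⟩ := ih r' hden' hr'0 hr'1
      refine ⟨-⌈s⌉, a :: l, ?_, ?_⟩
      · intro x hx
        rcases List.mem_cons.mp hx with h | h
        · omega
        · exact hal x h
      · simp only [negCF, heq]
        rw [hinv]
        have hr'ne : r' ≠ 0 := ne_of_gt hr'0
        field_simp
        rw [hr']; push_cast; ring

/-- Every rational `r` with `0 < r < 1` has `-1/r = [a₁, …, aₙ]` as a negative continued
fraction with all coefficients integers `aᵢ ≤ -2`. -/
theorem neg_continued_fraction_exists (r : ℚ) (h0 : 0 < r) (h1 : r < 1) :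
    ∃ (a : ℤ) (l : List ℤ), (∀ x ∈ a :: l, x ≤ -2) ∧ negCF a l = -1 / r :=
  negCF_aux r.den r le_rfl h0 h1
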